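/- Let γ₁ > γ₂ > γ₃ be real numbers and let A = |γ₃−γ₂|(1+|γ₁|+|γ₁|²) + |γ₃−γ₁|(1+|γ₂|+|γ₂|²) + |γ₂−γ₁|(1+|γ₃|+|γ₃|²). Then for each i ∈ {1,2,3} and all real t, s: |gᵢ(t,s)| + |∂gᵢ/∂t (t,s)| + |∂²gᵢ/∂t² (t,s)| ≤ A e^{−γᵢ(t−s)}, where the partial derivatives are taken on each of the two pieces t ≥ s and t ≤ s. -/

import Mathlib

open MeasureTheory Filter Set Real Asymptotics

noncomputable section

/-- The `k`-th `t`-derivative of the piecewise kernel `gᵢ`, `i = 1,…,4`,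
computed on each of the two pieces `t ≥ s`, `t ≤ s`. -/
def gker (g1 g2 g3 : ℝ) (i k : ℕ) (t s : ℝ) : ℝ :=
  let h : ℝ → ℝ := fun g => (-g) ^ k * Real.exp (-g * (t - s))
  if i = 1 then
    (if s ≤ t then 0 else (g2 - g3) * h g1 + (g3 - g1) * h g2 + (g1 - g2) * h g3)
  else if i = 2 then
    (if s ≤ t then (g2 - g3) * h g1 else (g1 - g2) * h g3 + (g3 - g1) * h g2)
  else if i = 3 then
    (if s ≤ t then (g2 - g3) * h g1 + (g3 - g1) * h g2 else (g2 - g1) * h g3)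
  else
    (if s ≤ t then (g2 - g3) * h g1 + (g3 - g1) * h g2 + (g1 - g2) * h g3 else 0)

/-- The constant `A`. -/
def Aconst3 (g1 g2 g3 : ℝ) : ℝ :=
  |g3 - g2| * (1 + |g1| + |g1| ^ 2) + |g3 - g1| * (1 + |g2| + |g2| ^ 2) +
    |g2 - g1| * (1 + |g3| + |g3| ^ 2)

/-- Bound for the three `t`-derivatives of a single exponential term. -/
lemma tb_aux (c g gi x : ℝ) (h : gi * x ≤ g * x) :
    |c * Real.exp (-(g * x))| + |c * (g * Real.exp (-(g * x)))| +
      |c * (g ^ 2 * Real.exp (-(g * x)))|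
      ≤ |c| * (1 + |g| + |g| ^ 2) * Real.exp (-(gi * x)) := by
  have hE : Real.exp (-(g * x)) ≤ Real.exp (-(gi * x)) := Real.exp_le_exp.2 (by linarith)
  rw [abs_mul, abs_mul, abs_mul, abs_mul, abs_mul, Real.abs_exp, abs_pow]
  nlinarith [mul_le_mul_of_nonneg_left hE
    (show (0:ℝ) ≤ |c| * (1 + |g| + |g| ^ 2) by positivity)]

/-- The bound `|gᵢ| + |∂ₜgᵢ| + |∂ₜ²gᵢ| ≤ A e^{-γᵢ(t-s)}` for `i = 1, 2, 3`. -/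
theorem thm_green_kernel_bound (g1 g2 g3 : ℝ) (h12 : g1 > g2) (h23 : g2 > g3) :
    ∀ t s : ℝ,
      (|gker g1 g2 g3 1 0 t s| + |gker g1 g2 g3 1 1 t s| + |gker g1 g2 g3 1 2 t s| ≤
        Aconst3 g1 g2 g3 * Real.exp (-g1 * (t - s))) ∧
      (|gker g1 g2 g3 2 0 t s| + |gker g1 g2 g3 2 1 t s| + |gker g1 g2 g3 2 2 t s| ≤
        Aconst3 g1 g2 g3 * Real.exp (-g2 * (t - s))) ∧
      (|gker g1 g2 g3 3 0 t s| + |gker g1 g2 g3 3 1 t s| + |gker g1 g2 g3 3 2 t s| ≤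
        Aconst3 g1 g2 g3 * Real.exp (-g3 * (t - s))) := by
  intro t s
  have hA : Aconst3 g1 g2 g3 =
      |g2 - g3| * (1 + |g1| + |g1| ^ 2) + |g3 - g1| * (1 + |g2| + |g2| ^ 2) +
        |g1 - g2| * (1 + |g3| + |g3| ^ 2) := by
    rw [Aconst3, abs_sub_comm g3 g2, abs_sub_comm g2 g1]
  have hP1 : (0:ℝ) ≤ |g2 - g3| * (1 + |g1| + |g1| ^ 2) * Real.exp (-(g2 * (t - s))) := by
    positivity
  have hP1' : (0:ℝ) ≤ |g2 - g3| * (1 + |g1| + |g1| ^ 2) * Real.exp (-(g3 * (t - s))) := by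
    positivity
  have hP2 : (0:ℝ) ≤ |g3 - g1| * (1 + |g2| + |g2| ^ 2) * Real.exp (-(g2 * (t - s))) := by
    positivity
  have hP2' : (0:ℝ) ≤ |g3 - g1| * (1 + |g2| + |g2| ^ 2) * Real.exp (-(g3 * (t - s))) := by
    positivity
  have hP3 : (0:ℝ) ≤ |g1 - g2| * (1 + |g3| + |g3| ^ 2) * Real.exp (-(g2 * (t - s))) := by
    positivity
  have hP3' : (0:ℝ) ≤ |g1 - g2| * (1 + |g3| + |g3| ^ 2) * Real.exp (-(g3 * (t - s))) := by
    positivity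
  rcases le_or_gt s t with h | h
  · -- t ≥ s, so x = t - s ≥ 0
    have hx : (0:ℝ) ≤ t - s := by linarith
    refine ⟨?_, ?_, ?_⟩
    · simp only [gker]; norm_num [h]
      rw [hA]; positivity
    · simp only [gker]; norm_num [h]
      have b1 := tb_aux (g2 - g3) g1 g2 (t - s)
        (mul_le_mul_of_nonneg_right (by linarith) hx)
      rw [hA]
      simp only [abs_mul, Real.abs_exp, abs_pow, sq_abs] at b1 hP2 hP3 ⊢
      linarith [b1, hP2, hP3]
    · simp only [gker]; norm_num [h]
      have b1 := tb_aux (g2 - g3) g1 g3 (t - s)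
        (mul_le_mul_of_nonneg_right (by linarith) hx)
      have b2 := tb_aux (g3 - g1) g2 g3 (t - s)
        (mul_le_mul_of_nonneg_right (by linarith) hx)
      have t0 : |(g2 - g3) * Real.exp (-(g1 * (t - s))) +
          (g3 - g1) * Real.exp (-(g2 * (t - s)))| ≤
          |(g2 - g3) * Real.exp (-(g1 * (t - s)))| +
          |(g3 - g1) * Real.exp (-(g2 * (t - s)))| := abs_add_le _ _
      have t1 : |(-((g2 - g3) * (g1 * Real.exp (-(g1 * (t - s)))))) +
          (-((g3 - g1) * (g2 * Real.exp (-(g2 * (t - s))))))| ≤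
          |(g2 - g3) * (g1 * Real.exp (-(g1 * (t - s))))| +
          |(g3 - g1) * (g2 * Real.exp (-(g2 * (t - s))))| := by
        refine (abs_add_le _ _).trans ?_
        rw [abs_neg, abs_neg]
      have t2 : |(g2 - g3) * (g1 ^ 2 * Real.exp (-(g1 * (t - s)))) +
          (g3 - g1) * (g2 ^ 2 * Real.exp (-(g2 * (t - s))))| ≤
          |(g2 - g3) * (g1 ^ 2 * Real.exp (-(g1 * (t - s))))| +
          |(g3 - g1) * (g2 ^ 2 * Real.exp (-(g2 * (t - s))))| := abs_add_le _ _
      rw [hA]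
      linarith [b1, b2, t0, t1, t2, hP3']
  · -- t < s, so x = t - s ≤ 0
    have hx : t - s ≤ 0 := by linarith
    have hh : ¬ s ≤ t := not_le.2 h
    refine ⟨?_, ?_, ?_⟩
    · simp only [gker]; norm_num [hh]
      have b1 := tb_aux (g2 - g3) g1 g1 (t - s) le_rfl
      have b2 := tb_aux (g3 - g1) g2 g1 (t - s)
        (mul_le_mul_of_nonpos_right (by linarith) hx)
      have b3 := tb_aux (g1 - g2) g3 g1 (t - s)
        (mul_le_mul_of_nonpos_right (by linarith) hx)
      have t0 : |(g2 - g3) * Real.exp (-(g1 * (t - s))) +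
          (g3 - g1) * Real.exp (-(g2 * (t - s))) +
          (g1 - g2) * Real.exp (-(g3 * (t - s)))| ≤
          |(g2 - g3) * Real.exp (-(g1 * (t - s)))| +
          |(g3 - g1) * Real.exp (-(g2 * (t - s)))| +
          |(g1 - g2) * Real.exp (-(g3 * (t - s)))| := abs_add_three _ _ _
      have t1 : |(-((g2 - g3) * (g1 * Real.exp (-(g1 * (t - s)))))) +
          (-((g3 - g1) * (g2 * Real.exp (-(g2 * (t - s)))))) +
          (-((g1 - g2) * (g3 * Real.exp (-(g3 * (t - s))))))| ≤
          |(g2 - g3) * (g1 * Real.exp (-(g1 * (t - s))))| +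
          |(g3 - g1) * (g2 * Real.exp (-(g2 * (t - s))))| +
          |(g1 - g2) * (g3 * Real.exp (-(g3 * (t - s))))| := by
        refine (abs_add_three _ _ _).trans ?_
        rw [abs_neg, abs_neg, abs_neg]
      have t2 : |(g2 - g3) * (g1 ^ 2 * Real.exp (-(g1 * (t - s)))) +
          (g3 - g1) * (g2 ^ 2 * Real.exp (-(g2 * (t - s)))) +
          (g1 - g2) * (g3 ^ 2 * Real.exp (-(g3 * (t - s))))| ≤
          |(g2 - g3) * (g1 ^ 2 * Real.exp (-(g1 * (t - s))))| +
          |(g3 - g1) * (g2 ^ 2 * Real.exp (-(g2 * (t - s))))| +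
          |(g1 - g2) * (g3 ^ 2 * Real.exp (-(g3 * (t - s))))| := abs_add_three _ _ _
      rw [hA]
      linarith [b1, b2, b3, t0, t1, t2]
    · simp only [gker]; norm_num [hh]
      have b2 := tb_aux (g3 - g1) g2 g2 (t - s) le_rfl
      have b3 := tb_aux (g1 - g2) g3 g2 (t - s)
        (mul_le_mul_of_nonpos_right (by linarith) hx)
      have t0 : |(g1 - g2) * Real.exp (-(g3 * (t - s))) +
          (g3 - g1) * Real.exp (-(g2 * (t - s)))| ≤
          |(g1 - g2) * Real.exp (-(g3 * (t - s)))| +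
          |(g3 - g1) * Real.exp (-(g2 * (t - s)))| := abs_add_le _ _
      have t1 : |(-((g1 - g2) * (g3 * Real.exp (-(g3 * (t - s)))))) +
          (-((g3 - g1) * (g2 * Real.exp (-(g2 * (t - s))))))| ≤
          |(g1 - g2) * (g3 * Real.exp (-(g3 * (t - s))))| +
          |(g3 - g1) * (g2 * Real.exp (-(g2 * (t - s))))| := by
        refine (abs_add_le _ _).trans ?_
        rw [abs_neg, abs_neg]
      have t2 : |(g1 - g2) * (g3 ^ 2 * Real.exp (-(g3 * (t - s)))) +
          (g3 - g1) * (g2 ^ 2 * Real.exp (-(g2 * (t - s))))| ≤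
          |(g1 - g2) * (g3 ^ 2 * Real.exp (-(g3 * (t - s))))| +
          |(g3 - g1) * (g2 ^ 2 * Real.exp (-(g2 * (t - s))))| := abs_add_le _ _
      rw [hA]
      linarith [b2, b3, t0, t1, t2, hP1]
    · simp only [gker]; norm_num [hh]
      have b3 := tb_aux (g2 - g1) g3 g3 (t - s) le_rfl
      have hb3 : |g2 - g1| = |g1 - g2| := abs_sub_comm _ _
      rw [hb3] at b3
      rw [hA]
      simp only [abs_mul, Real.abs_exp, abs_pow, sq_abs, hb3] at b3 hP1' hP2' ⊢
      linarith [b3, hP1', hP2']
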